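/- Let H be an N×N complex Hadamard matrix and r ≥ 1. Then the truncation matrix X^{(r)} ∈ M_{N^r}(ℂ) is self-adjoint and its eigenvalues all lie in the interval [0, N]; equivalently, X^{(r)} is positive semidefinite and N·Id − X^{(r)} is positive semidefinite. -/

import Mathlib

open Matrix BigOperators ComplexConjugate
open scoped ComplexOrder

/-- `H` is a complex Hadamard matrix. -/
def IsHadamard {I : Type*} [Fintype I] [DecidableEq I] (H : Matrix I I ℂ) : Prop :=
  (∀ i j, ‖H i j‖ = 1) ∧
  (∀ i j, ∑ k, H i k * conj (H j k) = if i = j then (Fintype.card I : ℂ) else 0)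

/-- The profile matrix of `H`: `Q_{ab,cd} = (1/N)·∑_i H_{ia}·H_{id}·conj(H_{ib}·H_{ic})`. -/
noncomputable def profile {I : Type*} [Fintype I] (H : Matrix I I ℂ) (a b c d : I) : ℂ :=
  (Fintype.card I : ℂ)⁻¹ * ∑ i, H i a * H i d * conj (H i b * H i c)

/-- The truncation matrix of order `r`:
`X_{a₁…a_r,b₁…b_r} = Q_{a₁b₁,a₂b₂}⋯Q_{a_rb_r,a₁b₁}` (cyclic indices, via `finRotate`). -/
noncomputable def trunc {I : Type*} [Fintype I] (H : Matrix I I ℂ) (r : ℕ) :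
    Matrix (Fin r → I) (Fin r → I) ℂ :=
  fun a b => ∏ s : Fin r,
    profile H (a s) (b s) (a (finRotate r s)) (b (finRotate r s))

open scoped ComplexInnerProductSpace in
/-- Grouped Bessel inequality: a family of vectors which is orthogonal (with common norm²
`c`) within each fiber of a grouping map `g` satisfies a Bessel-type bound with constant
`card π * c`. -/
private lemma grouped_bessel {ι π κ : Type*} [Fintype ι] [Fintype κ] [Fintype π]
    [DecidableEq ι] [DecidableEq π]
    (u : ι → EuclideanSpace ℂ κ) (g : ι → π) (c : ℝ) (hc : 0 < c)
    (horth : ∀ a b, g a = g b → ⟪u a, u b⟫ = if a = b then (c : ℂ) else 0)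
    (y : EuclideanSpace ℂ κ) :
    ∑ a, ‖⟪u a, y⟫‖ ^ 2 ≤ (Fintype.card π) * c * ‖y‖ ^ 2 := by
  rw [← Fintype.sum_fiberwise g (fun a => ‖⟪u a, y⟫‖ ^ 2)]
  have fiber : ∀ p : π, ∑ a : {a // g a = p}, ‖⟪u a.1, y⟫‖ ^ 2 ≤ c * ‖y‖ ^ 2 := by
    intro p
    have hsc : 0 < Real.sqrt c := Real.sqrt_pos.mpr hc
    set α : ℝ := (Real.sqrt c)⁻¹ with hα
    have hα2 : α * α = c⁻¹ := by
      rw [hα, ← mul_inv, Real.mul_self_sqrt hc.le]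
    have horth' : Orthonormal ℂ (fun a : {a // g a = p} => (α : ℂ) • u a.1) := by
      rw [orthonormal_iff_ite]
      intro a b
      rw [inner_smul_left, inner_smul_right, Complex.conj_ofReal,
        horth a.1 b.1 (by rw [a.2, b.2])]
      by_cases h : a = b
      · subst h
        rw [if_pos rfl, if_pos rfl, ← Complex.ofReal_mul]
        norm_cast
        rw [← mul_assoc, hα2]
        exact inv_mul_cancel₀ hc.ne'
      · have h1 : a.1 ≠ b.1 := fun hh => h (Subtype.ext hh)
        rw [if_neg h1, if_neg h, mul_zero, mul_zero]
    have hb := horth'.sum_inner_products_le (s := Finset.univ) y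
    have hterm : ∀ a : {a // g a = p},
        ‖⟪(α : ℂ) • u a.1, y⟫‖ ^ 2 = c⁻¹ * ‖⟪u a.1, y⟫‖ ^ 2 := by
      intro a
      rw [inner_smul_left, Complex.conj_ofReal, norm_mul, mul_pow, ← hα2,
        Complex.norm_real, Real.norm_eq_abs, abs_of_nonneg (by positivity : (0:ℝ) ≤ α)]
      ring
    rw [Finset.sum_congr rfl (fun a _ => hterm a), ← Finset.mul_sum] at hb
    calc ∑ a : {a // g a = p}, ‖⟪u a.1, y⟫‖ ^ 2
        = c * (c⁻¹ * ∑ a : {a // g a = p}, ‖⟪u a.1, y⟫‖ ^ 2) := by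
          rw [← mul_assoc, mul_inv_cancel₀ hc.ne', one_mul]
      _ ≤ c * ‖y‖ ^ 2 := mul_le_mul_of_nonneg_left hb hc.le
  calc ∑ p : π, ∑ a : {a // g a = p}, ‖⟪u a.1, y⟫‖ ^ 2
      ≤ ∑ _p : π, c * ‖y‖ ^ 2 := Finset.sum_le_sum fun p _ => fiber p
    _ = (Fintype.card π) * c * ‖y‖ ^ 2 := by
        rw [Finset.sum_const, Finset.card_univ, nsmul_eq_mul]; ring

/-- The "amplification" matrix `W`: `W_{a,k} = ∏_s H_{k_s a_s}·conj(H_{k_s a_{s+1}})`. -/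
private noncomputable def Wmat {N : ℕ} (H : Matrix (Fin N) (Fin N) ℂ) (r : ℕ) :
    Matrix (Fin r → Fin N) (Fin r → Fin N) ℂ :=
  fun a k => ∏ s, H (k s) (a s) * conj (H (k s) (a (finRotate r s)))

/-- The Gram products of the rows of `W`. -/
private noncomputable def Pgram {N : ℕ} (H : Matrix (Fin N) (Fin N) ℂ) (r : ℕ)
    (a b : Fin r → Fin N) : ℂ :=
  ∏ s, ∑ i, H i (a s) * conj (H i (b s)) *
    (conj (H i (a (finRotate r s))) * H i (b (finRotate r s)))

private lemma Wmat_gram {N r : ℕ} (H : Matrix (Fin N) (Fin N) ℂ) (a b : Fin r → Fin N) :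
    ∑ k, Wmat H r a k * conj (Wmat H r b k) = Pgram H r a b := by
  have h1 : ∀ k : Fin r → Fin N, Wmat H r a k * conj (Wmat H r b k)
      = ∏ s, (H (k s) (a s) * conj (H (k s) (b s)) *
          (conj (H (k s) (a (finRotate r s))) * H (k s) (b (finRotate r s)))) := by
    intro k
    unfold Wmat
    rw [map_prod, ← Finset.prod_mul_distrib]
    exact Finset.prod_congr rfl fun s _ => by
      simp only [_root_.map_mul, Complex.conj_conj]; ring
  rw [Finset.sum_congr rfl fun k _ => h1 k]
  unfold Pgram
  exact (Fintype.prod_sum (κ := fun _ : Fin r => Fin N) (fun s i =>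
    H i (a s) * conj (H i (b s)) *
      (conj (H i (a (finRotate r s))) * H i (b (finRotate r s))))).symm

private lemma trunc_eq_gram {N r : ℕ} (H : Matrix (Fin N) (Fin N) ℂ) :
    trunc H r = (((N:ℂ))⁻¹)^r • (Wmat H r * (Wmat H r)ᴴ) := by
  ext a b
  have h1 : trunc H r a b = (((N:ℂ))⁻¹)^r * Pgram H r a b := by
    unfold trunc profile Pgram
    rw [Finset.prod_mul_distrib, Finset.prod_const, Finset.card_univ, Fintype.card_fin,
      Fintype.card_fin]
    congr 1
    exact Finset.prod_congr rfl fun s _ =>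
      Finset.sum_congr rfl fun i _ => by simp only [_root_.map_mul]; ring
  rw [h1, Matrix.smul_apply, Matrix.mul_apply, smul_eq_mul]
  congr 1
  rw [← Wmat_gram H a b]
  exact Finset.sum_congr rfl fun k _ => by rw [conjTranspose_apply, starRingEnd_apply]

open Fin.NatCast Fin.CommRing in
private lemma chain_ne {N r' : ℕ} {a b : Fin (r'+1) → Fin N} (h0 : a 0 = b 0) (hne : a ≠ b) :
    ∃ s, a s = b s ∧ a (finRotate (r'+1) s) ≠ b (finRotate (r'+1) s) := by
  by_contra hc
  push_neg at hc
  apply hne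
  have key : ∀ m : ℕ, a (m : Fin (r'+1)) = b (m : Fin (r'+1)) := by
    intro m
    induction m with
    | zero => simpa using h0
    | succ m ih =>
      have h2 := hc (m : Fin (r'+1)) ih
      rw [finRotate_succ_apply] at h2
      rw [show ((m+1:ℕ) : Fin (r'+1)) = (m : Fin (r'+1)) + 1 from by push_cast; ring]
      exact h2
  funext j
  have := key j.val
  rwa [Fin.cast_val_eq_self] at this

private lemma Pgram_eq {N r' : ℕ} {H : Matrix (Fin N) (Fin N) ℂ}
    (hU : ∀ i j, H i j * conj (H i j) = 1)
    (hcol : ∀ c d, (∑ i, conj (H i c) * H i d) = if c = d then (N:ℂ) else 0)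
    (a b : Fin (r'+1) → Fin N) (h0 : a 0 = b 0) :
    Pgram H (r'+1) a b = if a = b then (N:ℂ)^(r'+1) else 0 := by
  split_ifs with h
  · subst h
    unfold Pgram
    have hfac : ∀ s : Fin (r'+1), (∑ i, H i (a s) * conj (H i (a s)) *
        (conj (H i (a (finRotate (r'+1) s))) * H i (a (finRotate (r'+1) s)))) = (N:ℂ) := by
      intro s
      have h2 : ∀ i, H i (a s) * conj (H i (a s)) *
          (conj (H i (a (finRotate (r'+1) s))) * H i (a (finRotate (r'+1) s))) = 1 := by
        intro i
        rw [hU, mul_comm (conj (H i (a (finRotate (r'+1) s)))), hU, one_mul]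
      rw [Finset.sum_congr rfl fun i _ => h2 i]
      simp
    rw [Finset.prod_congr rfl fun s _ => hfac s, Finset.prod_const, Finset.card_univ,
      Fintype.card_fin]
  · obtain ⟨s, hs, hs'⟩ := chain_ne h0 h
    unfold Pgram
    apply Finset.prod_eq_zero (Finset.mem_univ s)
    calc ∑ i, H i (a s) * conj (H i (b s)) *
          (conj (H i (a (finRotate (r'+1) s))) * H i (b (finRotate (r'+1) s)))
        = ∑ i, conj (H i (a (finRotate (r'+1) s))) * H i (b (finRotate (r'+1) s)) := by
          refine Finset.sum_congr rfl fun i _ => ?_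
          rw [hs, hU, one_mul]
      _ = 0 := by rw [hcol, if_neg hs']

/-- Reinterpret a plain function as a member of Euclidean space. -/
private noncomputable def toE (N r' : ℕ) : ((Fin (r'+1) → Fin N) → ℂ) →
    EuclideanSpace ℂ (Fin (r'+1) → Fin N) := fun v => WithLp.toLp 2 v

set_option maxHeartbeats 1000000 in
open scoped ComplexInnerProductSpace in
/-- the truncation matrix `X^{(r)}` is self-adjoint with all eigenvalues in
`[0, N]`: it is positive semidefinite and `N·Id − X^{(r)}` is positive semidefinite. -/
theorem trunc_posSemidef (N : ℕ) (hN : 1 ≤ N) (r : ℕ) (hr : 1 ≤ r)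
    (H : Matrix (Fin N) (Fin N) ℂ) (hH : _root_.IsHadamard H) :
    (trunc H r).IsHermitian ∧ (trunc H r).PosSemidef ∧
      ((N : ℂ) • (1 : Matrix (Fin r → Fin N) (Fin r → Fin N) ℂ) - trunc H r).PosSemidef := by
  obtain ⟨r', rfl⟩ : ∃ r', r = r' + 1 := ⟨r - 1, by omega⟩
  have hNC : (N:ℂ) ≠ 0 := Nat.cast_ne_zero.mpr (by omega)
  have hNR : (0:ℝ) < (N:ℝ) := by
    have h0 : 0 < N := by omega
    exact_mod_cast h0
  have hU : ∀ i j, H i j * conj (H i j) = 1 := by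
    intro i j
    rw [Complex.mul_conj, Complex.normSq_eq_norm_sq, hH.1]
    norm_num
  have hcol : ∀ c d, (∑ i, conj (H i c) * H i d) = if c = d then (N:ℂ) else 0 := by
    have h1 : H * ((N:ℂ)⁻¹ • Hᴴ) = 1 := by
      ext i j
      simp only [Matrix.mul_apply, Matrix.smul_apply, conjTranspose_apply, smul_eq_mul,
        Matrix.one_apply]
      calc ∑ k, H i k * ((N:ℂ)⁻¹ * star (H j k))
          = (N:ℂ)⁻¹ * ∑ k, H i k * conj (H j k) := by
            rw [Finset.mul_sum]
            exact Finset.sum_congr rfl fun k _ => by rw [starRingEnd_apply]; ring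
        _ = if i = j then 1 else 0 := by
            rw [hH.2 i j]
            split_ifs
            · simp only [Fintype.card_fin]
              exact inv_mul_cancel₀ hNC
            · exact mul_zero _
    have h2 : ((N:ℂ)⁻¹ • Hᴴ) * H = 1 := mul_eq_one_comm.mp h1
    intro c d
    have h3 := congrFun (congrFun h2 c) d
    simp only [Matrix.mul_apply, Matrix.smul_apply, conjTranspose_apply, smul_eq_mul,
      Matrix.one_apply] at h3
    have h4 : (N:ℂ)⁻¹ * ∑ i, conj (H i c) * H i d = if c = d then 1 else 0 := by
      rw [Finset.mul_sum, ← h3]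
      exact Finset.sum_congr rfl fun i _ => by rw [starRingEnd_apply]; ring
    calc ∑ i, conj (H i c) * H i d
        = (N:ℂ) * ((N:ℂ)⁻¹ * ∑ i, conj (H i c) * H i d) := by
          rw [← mul_assoc, mul_inv_cancel₀ hNC, one_mul]
      _ = (N:ℂ) * (if c = d then 1 else 0) := by rw [h4]
      _ = if c = d then (N:ℂ) else 0 := by split_ifs <;> ring
  set W := Wmat H (r'+1) with hW
  have htrunc : trunc H (r'+1) = (((N:ℂ))⁻¹)^(r'+1) • (W * Wᴴ) := trunc_eq_gram H
  have hdot : ∀ v : (Fin (r'+1) → Fin N) → ℂ,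
      star v ⬝ᵥ v = ((‖toE N r' v‖ : ℝ) : ℂ)^2 := by
    intro v
    have h : star v ⬝ᵥ v = ⟪toE N r' v, toE N r' v⟫ := by
      simp only [toE, PiLp.inner_apply, RCLike.inner_apply, dotProduct, Pi.star_apply,
        starRingEnd_apply, WithLp.ofLp_toLp, mul_comm]
    rw [h, inner_self_eq_norm_sq_to_K]
    norm_cast
  have hquad : ∀ x : (Fin (r'+1) → Fin N) → ℂ,
      star x ⬝ᵥ ((W * Wᴴ) *ᵥ x) = star (Wᴴ *ᵥ x) ⬝ᵥ (Wᴴ *ᵥ x) := by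
    intro x
    rw [← mulVec_mulVec, dotProduct_mulVec, star_mulVec, conjTranspose_conjTranspose]
  have hkey : ∀ x : (Fin (r'+1) → Fin N) → ℂ,
      ‖toE N r' (Wᴴ *ᵥ x)‖^2 ≤ (N:ℝ)^(r'+2) * ‖toE N r' x‖^2 := by
    intro x
    set y := Wᴴ *ᵥ x with hy
    set z := W *ᵥ y with hz
    set u : (Fin (r'+1) → Fin N) → EuclideanSpace ℂ (Fin (r'+1) → Fin N) :=
      fun a => toE N r' (fun k => conj (W a k)) with hu
    have horth : ∀ a b, a 0 = b 0 →
        ⟪u a, u b⟫ = if a = b then (((N:ℝ)^(r'+1) : ℝ) : ℂ) else 0 := by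
      intro a b h0
      have h5 : ⟪u a, u b⟫ = ∑ k, W a k * conj (W b k) := by
        simp only [hu, toE, PiLp.inner_apply, RCLike.inner_apply, Complex.conj_conj, WithLp.ofLp_toLp,
          mul_comm]
      rw [h5, hW, Wmat_gram, Pgram_eq hU hcol a b h0]
      push_cast
      rfl
    have hb := grouped_bessel u (fun a => a 0) ((N:ℝ)^(r'+1)) (by positivity) horth
      (toE N r' y)
    have hinner : ∀ a, ⟪u a, toE N r' y⟫ = z a := by
      intro a
      simp only [hu, toE, PiLp.inner_apply, RCLike.inner_apply, Complex.conj_conj, WithLp.ofLp_toLp]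
      rw [hz]
      exact Finset.sum_congr rfl fun k _ => mul_comm _ _
    have hzsum : ∑ a, ‖⟪u a, toE N r' y⟫‖^2 = ‖toE N r' z‖^2 := by
      rw [EuclideanSpace.norm_eq, Real.sq_sqrt (by positivity)]
      exact Finset.sum_congr rfl fun a _ => by rw [hinner a]; rfl
    have h1 : ‖toE N r' z‖^2 ≤ (N:ℝ)^(r'+2) * ‖toE N r' y‖^2 := by
      rw [← hzsum]
      calc ∑ a, ‖⟪u a, toE N r' y⟫‖^2
          ≤ (Fintype.card (Fin N)) * (N:ℝ)^(r'+1) * ‖toE N r' y‖^2 := hb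
        _ = (N:ℝ)^(r'+2) * ‖toE N r' y‖^2 := by
            rw [Fintype.card_fin]; ring
    have h2 : ((‖toE N r' y‖^2 : ℝ) : ℂ) = ⟪toE N r' x, toE N r' z⟫ := by
      have e1 : ⟪toE N r' x, toE N r' z⟫ = star x ⬝ᵥ z := by
        simp only [toE, PiLp.inner_apply, RCLike.inner_apply, dotProduct, Pi.star_apply,
          starRingEnd_apply, WithLp.ofLp_toLp, mul_comm]
      have e2 : star x ᵥ* W = star y := by
        rw [hy, star_mulVec, conjTranspose_conjTranspose]
      rw [e1, hz, dotProduct_mulVec, e2, hdot y]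
      norm_cast
    have h3 : ‖toE N r' y‖^2 ≤ ‖toE N r' x‖ * ‖toE N r' z‖ := by
      have h6 := norm_inner_le_norm (𝕜 := ℂ) (toE N r' x) (toE N r' z)
      rw [← h2] at h6
      rwa [Complex.norm_real, Real.norm_eq_abs, abs_of_nonneg (by positivity)] at h6
    by_cases hy0 : ‖toE N r' y‖ = 0
    · rw [hy0, zero_pow (by norm_num : (2:ℕ) ≠ 0)]
      positivity
    · have hy2 : 0 < ‖toE N r' y‖^2 := by
        have := (norm_nonneg (toE N r' y)).lt_of_ne (Ne.symm hy0)
        positivity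
      have e4 : ‖toE N r' y‖^2 * ‖toE N r' y‖^2
          ≤ ((N:ℝ)^(r'+2) * ‖toE N r' x‖^2) * ‖toE N r' y‖^2 := by
        calc ‖toE N r' y‖^2 * ‖toE N r' y‖^2
            ≤ (‖toE N r' x‖ * ‖toE N r' z‖) * (‖toE N r' x‖ * ‖toE N r' z‖) :=
              mul_self_le_mul_self (by positivity) h3
          _ = ‖toE N r' x‖^2 * ‖toE N r' z‖^2 := by ring
          _ ≤ ‖toE N r' x‖^2 * ((N:ℝ)^(r'+2) * ‖toE N r' y‖^2) :=
              mul_le_mul_of_nonneg_left h1 (by positivity)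
          _ = ((N:ℝ)^(r'+2) * ‖toE N r' x‖^2) * ‖toE N r' y‖^2 := by ring
      exact le_of_mul_le_mul_right e4 hy2
  have hcR : (((N:ℂ))⁻¹)^(r'+1) = ((((N:ℝ)⁻¹)^(r'+1) : ℝ) : ℂ) := by
    push_cast
    ring
  have hherm : (trunc H (r'+1)).IsHermitian := by
    rw [htrunc]
    have h1 : (W * Wᴴ).IsHermitian := isHermitian_mul_conjTranspose_self W
    show ((((N:ℂ))⁻¹)^(r'+1) • (W * Wᴴ))ᴴ = (((N:ℂ))⁻¹)^(r'+1) • (W * Wᴴ)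
    rw [conjTranspose_smul, h1]
    congr 1
    simp
  refine ⟨hherm, posSemidef_iff_dotProduct_mulVec.mpr ⟨hherm, fun x => ?_⟩,
    posSemidef_iff_dotProduct_mulVec.mpr ⟨?_, fun x => ?_⟩⟩
  · rw [htrunc, smul_mulVec, dotProduct_smul, smul_eq_mul, hquad x,
      hdot (Wᴴ *ᵥ x), hcR, ← Complex.ofReal_pow, ← Complex.ofReal_mul]
    exact Complex.zero_le_real.mpr (by positivity)
  · show ((N : ℂ) • 1 - trunc H (r'+1))ᴴ = (N : ℂ) • 1 - trunc H (r'+1)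
    rw [conjTranspose_sub, conjTranspose_smul, conjTranspose_one, hherm]
    congr 2
    simp
  · rw [Matrix.sub_mulVec, dotProduct_sub, htrunc, smul_mulVec, smul_mulVec,
      dotProduct_smul, dotProduct_smul, smul_eq_mul, smul_eq_mul, one_mulVec, hquad x,
      hdot (Wᴴ *ᵥ x), hdot x, hcR, ← Complex.ofReal_pow, ← Complex.ofReal_pow,
      ← Complex.ofReal_mul,
      show ((N:ℕ):ℂ) = (((N:ℕ):ℝ):ℂ) from (Complex.ofReal_natCast N).symm,
      ← Complex.ofReal_mul, ← Complex.ofReal_sub]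
    refine Complex.zero_le_real.mpr ?_
    have hb := hkey x
    have hc2 : ((N:ℝ)⁻¹)^(r'+1) * ‖toE N r' (Wᴴ *ᵥ x)‖^2 ≤ (N:ℝ) * ‖toE N r' x‖^2 := by
      calc ((N:ℝ)⁻¹)^(r'+1) * ‖toE N r' (Wᴴ *ᵥ x)‖^2
          ≤ ((N:ℝ)⁻¹)^(r'+1) * ((N:ℝ)^(r'+2) * ‖toE N r' x‖^2) :=
            mul_le_mul_of_nonneg_left hb (by positivity)
        _ = (N:ℝ) * ‖toE N r' x‖^2 := by
            rw [← mul_assoc, inv_pow, pow_succ (N:ℝ) (r'+1),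
              inv_mul_cancel_left₀ (pow_ne_zero _ hNR.ne')]
    linarith
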